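/- If γ : [a,b] → V is a continuous path of bounded variation, then for any sequence of partitions 𝒫ₖ of [a,b] with mesh tending to 0, the partition sums ∑ᵢ ‖γ(u_{i+1}) − γ(u_i)‖ converge to the total variation |γ|. -/

import Mathlib

/-- Telescoping triangle inequality. -/
lemma tele_norm {V : Type*} [NormedAddCommGroup V] (f : ℕ → V) :
    ∀ c d : ℕ, d ≤ c → ‖f c - f d‖ ≤ ∑ i ∈ Finset.Ico d c, ‖f (i + 1) - f i‖ := by
  intro c
  induction c with
  | zero => intro d hd; simp [Nat.le_zero.mp hd]
  | succ c ih =>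
    intro d hd
    rcases Nat.lt_or_ge d (c + 1) with h | h
    · have hdc : d ≤ c := Nat.lt_succ_iff.mp h
      have : ‖f (c+1) - f d‖ ≤ ‖f (c+1) - f c‖ + ‖f c - f d‖ := norm_sub_le_norm_sub_add_norm_sub _ _ _
      rw [Finset.sum_Ico_succ_top hdc]
      have := ih d hdc
      linarith
    · have : d = c + 1 := le_antisymm hd h
      simp [this]

/-- Summation over consecutive `Ico` blocks of a monotone index map. -/
lemma sum_Ico_blocks (g : ℕ → ℝ) (ι : ℕ → ℕ) (hι : Monotone ι) :
    ∀ m : ℕ, ∑ j ∈ Finset.range m, ∑ i ∈ Finset.Ico (ι j) (ι (j + 1)), g i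
      = ∑ i ∈ Finset.Ico (ι 0) (ι m), g i := by
  intro m
  induction m with
  | zero => simp
  | succ m ih =>
    rw [Finset.sum_range_succ, ih,
      Finset.sum_Ico_consecutive _ (hι (Nat.zero_le m)) (hι (Nat.le_succ m))]

/-- Converting an `edist` partition sum to a real norm sum. -/
lemma edist_sum_toReal {V : Type*} [NormedAddCommGroup V] (γ : ℝ → V) (t : ℕ → ℝ) (m : ℕ) :
    (∑ i ∈ Finset.range m, edist (γ (t (i + 1))) (γ (t i))).toReal
      = ∑ i ∈ Finset.range m, ‖γ (t (i + 1)) - γ (t i)‖ := by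
  rw [ENNReal.toReal_sum (fun i _ => edist_ne_top _ _)]
  refine Finset.sum_congr rfl fun i _ => ?_
  rw [edist_dist, ENNReal.toReal_ofReal dist_nonneg, dist_eq_norm]

/-- For a continuous path of bounded variation, partition sums along any sequence of
partitions with mesh tending to `0` converge to the total variation. -/
theorem partition_sums_tendsto_variation {V : Type*} [NormedAddCommGroup V] [NormedSpace ℝ V]
    (γ : ℝ → V) (a b : ℝ) (hab : a ≤ b)
    (hcont : ContinuousOn γ (Set.Icc a b))
    (hbv : eVariationOn γ (Set.Icc a b) ≠ ⊤)
    (n : ℕ → ℕ) (u : ℕ → ℕ → ℝ)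
    (h0 : ∀ k, u k 0 = a) (hlast : ∀ k, u k (n k) = b)
    (hmono : ∀ k, ∀ i < n k, u k i < u k (i + 1))
    (hmesh : ∀ ε > 0, ∃ K, ∀ k ≥ K, ∀ i < n k, u k (i + 1) - u k i < ε) :
    Filter.Tendsto (fun k => ∑ i ∈ Finset.range (n k), ‖γ (u k (i + 1)) - γ (u k i)‖)
      Filter.atTop (nhds (eVariationOn γ (Set.Icc a b)).toReal) := by
  classical
  set T : ℝ := (eVariationOn γ (Set.Icc a b)).toReal with hT
  set S : ℕ → ℝ := fun k => ∑ i ∈ Finset.range (n k), ‖γ (u k (i + 1)) - γ (u k i)‖ with hS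
  -- monotonicity of the partitions up to n k
  have umono : ∀ k, ∀ i j : ℕ, i ≤ j → j ≤ n k → u k i ≤ u k j := by
    intro k i j hij hj
    induction j with
    | zero => simp [Nat.le_zero.mp hij]
    | succ j ih =>
      rcases Nat.lt_or_ge i (j + 1) with h | h
      · have h1 : u k i ≤ u k j := ih (Nat.lt_succ_iff.mp h) (le_trans (Nat.le_succ j) hj)
        exact h1.trans (hmono k j (Nat.lt_of_lt_of_le (Nat.lt_succ_self j) hj)).le
      · have : i = j + 1 := le_antisymm hij h
        simp [this]
  have umem : ∀ k, ∀ i ≤ n k, u k i ∈ Set.Icc a b := by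
    intro k i hi
    constructor
    · rw [← h0 k]; exact umono k 0 i (Nat.zero_le i) hi
    · rw [← hlast k]; exact umono k i (n k) hi le_rfl
  -- Upper bound: S k ≤ T
  have upper : ∀ k, S k ≤ T := by
    intro k
    have hsum : (∑ i ∈ Finset.range (n k), edist (γ (u k (i + 1))) (γ (u k i)))
        ≤ eVariationOn γ (Set.Icc a b) := by
      apply eVariationOn.sum_le_of_monotoneOn_Iic
      · intro i hi j hj hij
        exact umono k i j hij hj
      · intro i hi; exact umem k i hi
    have : S k = (∑ i ∈ Finset.range (n k), edist (γ (u k (i + 1))) (γ (u k i))).toReal :=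
      (edist_sum_toReal γ (u k) (n k)).symm
    rw [this, hT]
    exact ENNReal.toReal_mono hbv hsum
  -- uniform continuity
  have hUC : UniformContinuousOn γ (Set.Icc a b) :=
    isCompact_Icc.uniformContinuousOn_of_continuous hcont
  rw [Metric.uniformContinuousOn_iff_le] at hUC
  rw [Metric.tendsto_atTop]
  intro ε hε
  -- choose a near-optimal partition
  obtain ⟨m, t, ht_mono, ht_mem, ht_sum⟩ :
      ∃ (m : ℕ) (t : ℕ → ℝ), Monotone t ∧ (∀ j, t j ∈ Set.Icc a b) ∧
        T - ε / 2 < ∑ j ∈ Finset.range m, ‖γ (t (j + 1)) - γ (t j)‖ := by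
    rcases eq_or_ne (eVariationOn γ (Set.Icc a b)) 0 with h0' | h0'
    · refine ⟨0, fun _ => a, monotone_const, fun _ => ⟨le_rfl, hab⟩, ?_⟩
      simp only [hT, h0', ENNReal.toReal_zero, Finset.range_zero, Finset.sum_empty]
      linarith
    · have hTpos : 0 < T := by
        rw [hT]; exact ENNReal.toReal_pos h0' hbv
      have hofr : ENNReal.ofReal (T - ε / 2) < eVariationOn γ (Set.Icc a b) := by
        rcases le_or_gt (T - ε / 2) 0 with h | h
        · rw [ENNReal.ofReal_of_nonpos h]
          exact pos_iff_ne_zero.mpr h0'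
        · calc ENNReal.ofReal (T - ε / 2) < ENNReal.ofReal T := by
                rw [ENNReal.ofReal_lt_ofReal_iff hTpos]; linarith
          _ = eVariationOn γ (Set.Icc a b) := by rw [hT, ENNReal.ofReal_toReal hbv]
      rw [eVariationOn, lt_iSup_iff] at hofr
      obtain ⟨⟨m, t, ht_mono, ht_mem⟩, hp⟩ := hofr
      refine ⟨m, t, ht_mono, ht_mem, ?_⟩
      have hsumne : (∑ i ∈ Finset.range m, edist (γ (t (i + 1))) (γ (t i))) ≠ ⊤ := by
        intro h
        exact hbv (top_le_iff.mp (h ▸ eVariationOn.sum_le (f := γ) (n := m) ht_mono ht_mem))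
      have h2 : T - ε / 2 < (∑ i ∈ Finset.range m, edist (γ (t (i + 1))) (γ (t i))).toReal := by
        rcases lt_or_ge (T - ε / 2) 0 with h | h
        · exact lt_of_lt_of_le h ENNReal.toReal_nonneg
        · exact (ENNReal.ofReal_lt_iff_lt_toReal h hsumne).mp hp
      rwa [edist_sum_toReal] at h2
  -- modulus of continuity
  set η : ℝ := ε / (4 * (m + 1)) with hη
  have hηpos : 0 < η := by positivity
  obtain ⟨δ, hδpos, hδ⟩ := hUC η hηpos
  obtain ⟨K, hK⟩ := hmesh δ hδpos
  refine ⟨K, fun k hk => ?_⟩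
  -- for this k, define the index map
  set ι : ℕ → ℕ := fun j => Nat.findGreatest (fun i => u k i ≤ t j) (n k) with hι
  have hι_le : ∀ j, ι j ≤ n k := fun j => Nat.findGreatest_le (n k)
  have hι_spec : ∀ j, u k (ι j) ≤ t j := by
    intro j
    exact Nat.findGreatest_spec (P := fun i => u k i ≤ t j) (Nat.zero_le (n k))
      (by show u k 0 ≤ t j; rw [h0 k]; exact (ht_mem j).1)
  have hι_close : ∀ j, t j - u k (ι j) < δ := by
    intro j
    rcases Nat.lt_or_ge (ι j) (n k) with h | h
    · have hgt : ¬ (u k (ι j + 1) ≤ t j) :=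
        Nat.findGreatest_is_greatest (Nat.lt_succ_self _) h
      push_neg at hgt
      have := hK k hk (ι j) h
      linarith
    · have heq : ι j = n k := le_antisymm (hι_le j) h
      have h1 : t j ≤ u k (ι j) := by rw [heq, hlast k]; exact (ht_mem j).2
      have := hι_spec j
      linarith
    -- monotone
  have hι_mono : Monotone ι := by
    intro j j' hjj'
    exact Nat.findGreatest_mono (fun i hi => hi.trans (ht_mono hjj')) le_rfl
  -- the key estimate per segment
  set g : ℕ → ℝ := fun i => ‖γ (u k (i + 1)) - γ (u k i)‖ with hg
  have hclose : ∀ j, ‖γ (t j) - γ (u k (ι j))‖ ≤ η := by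
    intro j
    have h1 : t j ∈ Set.Icc a b := ht_mem j
    have h2 : u k (ι j) ∈ Set.Icc a b := umem k (ι j) (hι_le j)
    have h3 : dist (t j) (u k (ι j)) ≤ δ := by
      rw [Real.dist_eq, abs_of_nonneg (by linarith [hι_spec j])]
      exact (hι_close j).le
    have := hδ (t j) h1 (u k (ι j)) h2 h3
    rwa [dist_eq_norm] at this
  have key : ∀ j, ‖γ (t (j + 1)) - γ (t j)‖ ≤ (∑ i ∈ Finset.Ico (ι j) (ι (j + 1)), g i) + 2 * η := by
    intro j
    have tri : ‖γ (t (j+1)) - γ (t j)‖ ≤ ‖γ (t (j+1)) - γ (u k (ι (j+1)))‖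
        + ‖γ (u k (ι (j+1))) - γ (u k (ι j))‖ + ‖γ (u k (ι j)) - γ (t j)‖ := by
      have e1 := norm_sub_le_norm_sub_add_norm_sub (γ (t (j+1))) (γ (u k (ι j))) (γ (t j))
      have e2 := norm_sub_le_norm_sub_add_norm_sub (γ (t (j+1))) (γ (u k (ι (j+1)))) (γ (u k (ι j)))
      linarith
    have htel : ‖γ (u k (ι (j+1))) - γ (u k (ι j))‖ ≤ ∑ i ∈ Finset.Ico (ι j) (ι (j + 1)), g i :=
      tele_norm (fun i => γ (u k i)) (ι (j+1)) (ι j) (hι_mono (Nat.le_succ j))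
    have hc1 := hclose (j + 1)
    have hc2 := hclose j
    rw [norm_sub_rev (γ (u k (ι j)))] at tri
    linarith
  -- sum up
  have hPsum : (∑ j ∈ Finset.range m, ‖γ (t (j + 1)) - γ (t j)‖)
      ≤ (∑ i ∈ Finset.Ico (ι 0) (ι m), g i) + 2 * m * η := by
    calc (∑ j ∈ Finset.range m, ‖γ (t (j + 1)) - γ (t j)‖)
        ≤ ∑ j ∈ Finset.range m, ((∑ i ∈ Finset.Ico (ι j) (ι (j + 1)), g i) + 2 * η) :=
          Finset.sum_le_sum fun j _ => key j
      _ = (∑ j ∈ Finset.range m, ∑ i ∈ Finset.Ico (ι j) (ι (j + 1)), g i) + m * (2 * η) := by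
          rw [Finset.sum_add_distrib, Finset.sum_const, Finset.card_range, nsmul_eq_mul]
      _ = (∑ i ∈ Finset.Ico (ι 0) (ι m), g i) + 2 * m * η := by
          rw [sum_Ico_blocks g ι hι_mono m]; ring
  have hsub : (∑ i ∈ Finset.Ico (ι 0) (ι m), g i) ≤ S k := by
    apply Finset.sum_le_sum_of_subset_of_nonneg
    · intro i hi
      rw [Finset.mem_Ico] at hi
      rw [Finset.mem_range]
      exact lt_of_lt_of_le hi.2 (hι_le m)
    · intro i _ _; exact norm_nonneg _
  have hmη : 2 * m * η ≤ ε / 2 := by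
    have hc : η * (4 * ((m : ℝ) + 1)) = ε := by
      rw [hη]; field_simp
    nlinarith [hc, hηpos, Nat.cast_nonneg (α := ℝ) m]
  have hlow : T - ε < S k := by
    have := le_trans hPsum (by linarith : (∑ i ∈ Finset.Ico (ι 0) (ι m), g i) + 2 * m * η ≤ S k + ε / 2)
    linarith
  rw [Real.dist_eq, abs_of_nonpos (by linarith [upper k])]
  linarith [upper k]
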